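/- Let b = {b_n} be a positive non-increasing summable sequence that is doubling (there exists c > 0 with b_n ≤ c·b_{2n} for all n) and satisfies sup_n s_{n+1}(b)/s_n(b) < 1/2 - δ for some δ > 0. Then b_{2^n} ≍ s_n(b), i.e., there exist constants c_1, c_2 > 0 with c_1 s_n(b) ≤ b_{2^n} ≤ c_2 s_n(b) for all n. -/

import Mathlib

open Filter Set Topology

/-- Number of closed balls of radius `δ` needed to cover `F`. -/
noncomputable def coverNum (F : Set ℝ) (δ : ℝ) : ℕ :=
  sInf {n : ℕ | ∃ S : Finset ℝ, S.card = n ∧ F ⊆ ⋃ x ∈ S, Metric.closedBall x δ}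

/-- Upper box-counting dimension. -/
noncomputable def upperBoxDim (F : Set ℝ) : ℝ :=
  limsup (fun δ : ℝ => Real.log (coverNum F δ) / -Real.log δ) (nhdsWithin 0 (Set.Ioi 0))

/-- Lower box-counting dimension. -/
noncomputable def lowerBoxDim (F : Set ℝ) : ℝ :=
  liminf (fun δ : ℝ => Real.log (coverNum F δ) / -Real.log δ) (nhdsWithin 0 (Set.Ioi 0))

/-- Assouad dimension. -/
noncomputable def assouadDim (E : Set ℝ) : ℝ :=
  sInf {α : ℝ | ∃ c > (0:ℝ), ∃ ρ > (0:ℝ), ∀ x ∈ E, ∀ r R : ℝ, 0 < r → r < R → R < ρ →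
    (coverNum (Metric.ball x R ∩ E) r : ℝ) ≤ c * (R / r) ^ α}

/-- Lower (Assouad) dimension. -/
noncomputable def lowerAssouadDim (E : Set ℝ) : ℝ :=
  sSup {α : ℝ | ∃ c > (0:ℝ), ∃ ρ > (0:ℝ), ∀ x ∈ E, ∀ r R : ℝ, 0 < r → r < R → R < ρ →
    c * (R / r) ^ α ≤ (coverNum (Metric.ball x R ∩ E) r : ℝ)}

/-- Upper θ-intermediate dimension (with the convention that at θ = 0 it is the
Hausdorff dimension). -/
noncomputable def upperIntDim (θ : ℝ) (F : Set ℝ) : ℝ :=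
  if θ = 0 then (dimH F).toReal else
  sInf {s : ℝ | 0 ≤ s ∧ ∀ ε > (0:ℝ), ∃ δ₀ > (0:ℝ), ∀ δ : ℝ, 0 < δ → δ ≤ δ₀ →
    ∃ (I : Finset ℕ) (U : ℕ → Set ℝ), (F ⊆ ⋃ i ∈ I, U i) ∧
      (∀ i ∈ I, δ ^ (1 / θ) ≤ Metric.diam (U i) ∧ Metric.diam (U i) ≤ δ) ∧
      ∑ i ∈ I, Metric.diam (U i) ^ s ≤ ε}

/-- Lower θ-intermediate dimension (with the convention that at θ = 0 it is the
Hausdorff dimension). -/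
noncomputable def lowerIntDim (θ : ℝ) (F : Set ℝ) : ℝ :=
  if θ = 0 then (dimH F).toReal else
  sInf {s : ℝ | 0 ≤ s ∧ ∀ ε > (0:ℝ), ∀ δ₀ > (0:ℝ), ∃ δ : ℝ, 0 < δ ∧ δ ≤ δ₀ ∧
    ∃ (I : Finset ℕ) (U : ℕ → Set ℝ), (F ⊆ ⋃ i ∈ I, U i) ∧
      (∀ i ∈ I, δ ^ (1 / θ) ≤ Metric.diam (U i) ∧ Metric.diam (U i) ≤ δ) ∧
      ∑ i ∈ I, Metric.diam (U i) ^ s ≤ ε}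

/-- tails `x_n = ∑_{i=n}^∞ a_i` (the sequence `a` is indexed from 1;
the value `a 0` is irrelevant). -/
noncomputable def xseq (a : ℕ → ℝ) (n : ℕ) : ℝ := ∑' i : ℕ, a (n + i)

/-- `s_n = 2^{-n} x_{2^n}`. -/
noncomputable def sseq (a : ℕ → ℝ) (n : ℕ) : ℝ := xseq a (2 ^ n) / 2 ^ n

/-- `r_n = 2^{-n} ∑_{i=2^n}^{2^{n+1}-1} a_i`. -/
noncomputable def rseq (a : ℕ → ℝ) (n : ℕ) : ℝ :=
  (∑ i ∈ Finset.range (2 ^ n), a (2 ^ n + i)) / 2 ^ n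

/-- The countable complementary set `D_a = {x_k : k ≥ 1} ∪ {0}`. -/
noncomputable def Da (a : ℕ → ℝ) : Set ℝ := {0} ∪ {y : ℝ | ∃ k ≥ 1, y = xseq a k}

/-- Length of the interval corresponding to node `m` (in binary-tree indexing, root `1`)
in the construction of the decreasing Cantor set: the sum of the gaps in the subtree of `m`. -/
noncomputable def clen (a : ℕ → ℝ) (m : ℕ) : ℝ :=
  ∑' k : ℕ, ∑ i ∈ Finset.range (2 ^ k), a (2 ^ k * m + i)

/-- Left endpoint of the interval corresponding to node `m`. -/
noncomputable def lft (a : ℕ → ℝ) : ℕ → ℝ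
  | 0 => 0
  | 1 => 0
  | n + 2 =>
    if (n + 2) % 2 = 0 then lft a ((n + 2) / 2)
    else lft a ((n + 2) / 2) + clen a (n + 1) + a ((n + 2) / 2)
termination_by n => n
decreasing_by all_goals omega

/-- The closed interval corresponding to node `m`:  node `2^n + j - 1` is the
interval `I_{n,j}` of step `n`, for `1 ≤ j ≤ 2^n`. -/
noncomputable def node (a : ℕ → ℝ) (m : ℕ) : Set ℝ := Set.Icc (lft a m) (lft a m + clen a m)

/-- The decreasing Cantor set `C_a` associated with the sequence `a`. -/
noncomputable def cantorSetOf (a : ℕ → ℝ) : Set ℝ :=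
  ⋂ n : ℕ, ⋃ j ∈ Finset.Icc 1 (2 ^ n), node a (2 ^ n + j - 1)

/-- `E` is a complementary set of the sequence `a`: a closed subset of `[0,1]`
whose complement in `[0,1]` is a disjoint union of open intervals of lengths `a_1, a_2, …`. -/
def IsComplSet (a : ℕ → ℝ) (E : Set ℝ) : Prop :=
  ∃ g : ℕ → ℝ,
    (∀ n ≥ 1, Set.Ioo (g n) (g n + a n) ⊆ Set.Icc 0 1) ∧
    (∀ m ≥ 1, ∀ n ≥ 1, m ≠ n →
      Disjoint (Set.Ioo (g m) (g m + a m)) (Set.Ioo (g n) (g n + a n))) ∧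
    E = Set.Icc 0 1 \ ⋃ n ∈ {k : ℕ | 1 ≤ k}, Set.Ioo (g n) (g n + a n)

/-- `γ_{θ,a}(r) = max{ m : s_m ≥ s_r^{1/θ} }`. -/
noncomputable def gammaIdx (a : ℕ → ℝ) (θ : ℝ) (r : ℕ) : ℕ :=
  sSup {m : ℕ | sseq a r ^ (1 / θ) ≤ sseq a m}

/-- If `b` is positive, non-increasing, summable, doubling, and
`s_{n+1}(b)/s_n(b) < 1/2 - δ` for all `n`, then `b_{2^n} ≍ s_n(b)`. -/
theorem bpow_asymp_sseq (b : ℕ → ℝ) (hpos : ∀ n ≥ 1, 0 < b n)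
    (hmono : ∀ n ≥ 1, b (n + 1) ≤ b n) (hsumm : Summable fun n => b (n + 1))
    (hdoub : ∃ c > (0:ℝ), ∀ n ≥ 1, b n ≤ c * b (2 * n))
    (δ : ℝ) (hδ : 0 < δ) (hgap : ∀ n : ℕ, sseq b (n + 1) / sseq b n < 1 / 2 - δ) :
    ∃ c₁ > (0:ℝ), ∃ c₂ > (0:ℝ), ∀ n : ℕ,
      c₁ * sseq b n ≤ b (2 ^ n) ∧ b (2 ^ n) ≤ c₂ * sseq b n := by

  obtain ⟨c, hc, hcdoub⟩ := hdoub
  have hble : ∀ k : ℕ, 1 ≤ k → ∀ m, k ≤ m → b m ≤ b k := by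
    intro k hk m hkm
    induction m, hkm using Nat.le_induction with
    | base => exact le_rfl
    | succ m hm ih => exact (hmono m (by omega)).trans ih
  have hsummtail : ∀ n : ℕ, 1 ≤ n → Summable fun i => b (n + i) := by
    intro n hn
    have h2 : Summable fun i => b (i + (n - 1) + 1) :=
      (summable_nat_add_iff (f := fun k => b (k + 1)) (n - 1)).mpr hsumm
    exact h2.congr (fun i => by congr 1; omega)
  have hxpos : ∀ n : ℕ, 1 ≤ n → 0 < xseq b n := by
    intro n hn
    exact Summable.tsum_pos (hsummtail n hn) (fun i => (hpos _ (by omega)).le) 0 (hpos _ (by omega))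
  have hxnonneg : ∀ n : ℕ, 1 ≤ n → 0 ≤ xseq b n := fun n hn => (hxpos n hn).le
  have hsplit : ∀ n k : ℕ, 1 ≤ n →
      xseq b n = (∑ i ∈ Finset.range k, b (n + i)) + xseq b (n + k) := by
    intro n k hn
    have h := Summable.sum_add_tsum_nat_add (f := fun i => b (n + i)) k (hsummtail n hn)
    rw [xseq, ← h]
    congr 1
    exact tsum_congr fun i => congrArg b (by omega)
  refine ⟨2 * δ, by linarith, c, hc, fun n => ?_⟩
  have h2n : (1:ℕ) ≤ 2 ^ n := Nat.one_le_two_pow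
  have h2n1 : (1:ℕ) ≤ 2 ^ (n + 1) := Nat.one_le_two_pow
  have hxx : (2:ℕ) ^ n + 2 ^ n = 2 ^ (n + 1) := by ring
  have hx := hsplit (2 ^ n) (2 ^ n) h2n
  rw [hxx] at hx
  have hPpos : (0:ℝ) < 2 ^ n := by positivity
  have hP1pos : (0:ℝ) < 2 ^ (n + 1) := by positivity
  have hs_def : xseq b (2 ^ n) = 2 ^ n * sseq b n := by
    rw [sseq]; field_simp
  have hs_def1 : xseq b (2 ^ (n + 1)) = 2 ^ (n + 1) * sseq b (n + 1) := by
    rw [sseq]; field_simp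
  have hspos : 0 < sseq b n := by
    rw [sseq]; exact div_pos (hxpos _ h2n) hPpos
  have hgap' : sseq b (n + 1) < (1 / 2 - δ) * sseq b n :=
    (div_lt_iff₀ hspos).mp (hgap n)
  -- block bounds
  have hBub : (∑ i ∈ Finset.range (2 ^ n), b (2 ^ n + i)) ≤ 2 ^ n * b (2 ^ n) := by
    calc (∑ i ∈ Finset.range (2 ^ n), b (2 ^ n + i))
        ≤ ∑ _i ∈ Finset.range (2 ^ n), b (2 ^ n) := by
          refine Finset.sum_le_sum fun i _ => ?_
          exact hble (2 ^ n) h2n _ (Nat.le_add_right _ _)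
      _ = 2 ^ n * b (2 ^ n) := by
          rw [Finset.sum_const, Finset.card_range, nsmul_eq_mul]
          push_cast; ring
  have hBlb : (2:ℝ) ^ n * b (2 ^ (n + 1)) ≤ ∑ i ∈ Finset.range (2 ^ n), b (2 ^ n + i) := by
    calc (2:ℝ) ^ n * b (2 ^ (n + 1))
        = ∑ _i ∈ Finset.range (2 ^ n), b (2 ^ (n + 1)) := by
          rw [Finset.sum_const, Finset.card_range, nsmul_eq_mul]
          push_cast; ring
      _ ≤ ∑ i ∈ Finset.range (2 ^ n), b (2 ^ n + i) := by
          refine Finset.sum_le_sum fun i hi => ?_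
          refine hble (2 ^ n + i) (by omega) _ ?_
          have : i ≤ 2 ^ n := (Finset.mem_range.mp hi).le
          omega
  have hBeq : (∑ i ∈ Finset.range (2 ^ n), b (2 ^ n + i))
      = 2 ^ n * sseq b n - 2 ^ (n + 1) * sseq b (n + 1) := by
    rw [← hs_def, ← hs_def1]; linarith [hx]
  have hpow : (2:ℝ) ^ (n + 1) = 2 * 2 ^ n := by ring
  constructor
  · -- lower bound : 2δ s_n ≤ b (2^n)
    have h3 : 2 * 2 ^ n * sseq b (n + 1) < 2 * 2 ^ n * ((1 / 2 - δ) * sseq b n) := by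
      have := mul_lt_mul_of_pos_left hgap' (by positivity : (0:ℝ) < 2 * 2 ^ n)
      linarith
    have hBeq' : (∑ i ∈ Finset.range (2 ^ n), b (2 ^ n + i))
        = 2 ^ n * sseq b n - 2 * 2 ^ n * sseq b (n + 1) := by
      rw [hBeq, hpow]
    have key : 2 * δ * sseq b n * 2 ^ n < b (2 ^ n) * 2 ^ n := by nlinarith [hBub, hBeq', h3]
    exact (lt_of_mul_lt_mul_right key hPpos.le).le
  · -- upper bound : b (2^n) ≤ c * s_n
    have hdoubn : b (2 ^ n) ≤ c * b (2 ^ (n + 1)) := by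
      have := hcdoub (2 ^ n) h2n
      have h2 : 2 * 2 ^ n = 2 ^ (n + 1) := by ring
      rwa [h2] at this
    have hxge : (2:ℝ) ^ n * b (2 ^ (n + 1)) ≤ 2 ^ n * sseq b n := by
      have := hxnonneg (2 ^ (n + 1)) h2n1
      rw [← hs_def]
      linarith [hx, hBlb]
    have hble' : b (2 ^ (n + 1)) ≤ sseq b n := le_of_mul_le_mul_left (by linarith) hPpos
    calc b (2 ^ n) ≤ c * b (2 ^ (n + 1)) := hdoubn
      _ ≤ c * sseq b n := mul_le_mul_of_nonneg_left hble' hc.le
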